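/- Let T be a measure-preserving automorphism of a probability space (X, μ), and let f ∈ L^∞(X, μ) be a T-invariant function with f ≥ 0 and ∫_X f dμ = 1. Let μ_f be the measure with dμ_f/dμ = f. Then the Kolmogorov–Sinai entropy satisfies h_{μ_f}(T) ≤ ‖f‖_∞ · h_μ(T). -/

import Mathlib

open MeasureTheory Filter Set
open scoped ENNReal

noncomputable def partEntropy {X : Type*} [MeasurableSpace X] (μ : Measure X)
    {ι : Type*} [Fintype ι] (P : X → ι) : ℝ :=
  ∑ i : ι, Real.negMulLog (μ (P ⁻¹' {i})).toReal

noncomputable def dynJoin {X : Type*} (T : X → X) {ι : Type*} (P : X → ι) (n : ℕ) :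
    X → Fin n → ι := fun x i => P (T^[(i : ℕ)] x)

noncomputable def entropyRel {X : Type*} [MeasurableSpace X] (μ : Measure X) (T : X → X)
    {ι : Type*} [Fintype ι] (P : X → ι) : ℝ :=
  ⨅ n : ℕ, partEntropy μ (dynJoin T P (n + 1)) / (n + 1)

noncomputable def ksEntropy {X : Type*} [MeasurableSpace X] (μ : Measure X) (T : X → X) : ℝ≥0∞ :=
  ⨆ (k : ℕ) (P : X → Fin k) (_ : Measurable P), ENNReal.ofReal (entropyRel μ T P)

/-- Pointwise Gibbs-type bound: if `0 ≤ t ≤ c * s` and `s ≤ 1`, then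
`-t log t ≤ c * (-s log s) + (s - t)`. -/
lemma negMulLog_le_aux {c t s : ℝ} (hc : 0 ≤ c) (ht : 0 ≤ t) (hs : 0 ≤ s) (hs1 : s ≤ 1)
    (hts : t ≤ c * s) : Real.negMulLog t ≤ c * Real.negMulLog s + (s - t) := by
  rcases eq_or_lt_of_le ht with rfl | htpos
  · have h1 : 0 ≤ Real.negMulLog s := Real.negMulLog_nonneg hs hs1
    simp only [Real.negMulLog_zero, sub_zero]
    nlinarith
  · have hspos : 0 < s := by nlinarith
    have hlog : Real.log (s / t) ≤ s / t - 1 := Real.log_le_sub_one_of_pos (by positivity)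
    have h2 : t * Real.log (s / t) ≤ s - t := by
      have := mul_le_mul_of_nonneg_left hlog (le_of_lt htpos)
      have ht' : t * (s / t - 1) = s - t := by field_simp
      linarith [this, ht'.le]
    have h3 : Real.negMulLog t = t * Real.log (s / t) - t * Real.log s := by
      rw [Real.log_div hspos.ne' htpos.ne']
      simp [Real.negMulLog]; ring
    have h4 : -(t * Real.log s) ≤ c * Real.negMulLog s := by
      have hls : -Real.log s ≥ 0 := by
        simpa using neg_nonneg.mpr (Real.log_nonpos hs hs1)
      have : t * (-Real.log s) ≤ (c * s) * (-Real.log s) :=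
        mul_le_mul_of_nonneg_right hts hls
      simp only [Real.negMulLog]
      nlinarith
    linarith [h3.le, h2, h4]

/-- If `ν A ≤ c * μ A` in reals for every measurable set, both measures are probability
measures, then `partEntropy ν Q ≤ c * partEntropy μ Q` for measurable `Q`. -/
lemma partEntropy_le_aux {X : Type*} [MeasurableSpace X] (μ ν : Measure X)
    [IsProbabilityMeasure μ] [IsProbabilityMeasure ν] {c : ℝ} (hc : 0 ≤ c)
    (hle : ∀ A : Set X, MeasurableSet A → (ν A).toReal ≤ c * (μ A).toReal)
    {ι : Type*} [Fintype ι] [MeasurableSpace ι] [MeasurableSingletonClass ι]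
    {Q : X → ι} (hQ : Measurable Q) :
    partEntropy ν Q ≤ c * partEntropy μ Q := by
  have hfib : ∀ i : ι, MeasurableSet (Q ⁻¹' {i}) := fun i => hQ (measurableSet_singleton i)
  have hsum : ∀ (κ : Measure X), IsProbabilityMeasure κ →
      ∑ i : ι, (κ (Q ⁻¹' {i})).toReal = 1 := by
    intro κ hκ
    have h1 : ∑ i : ι, κ (Q ⁻¹' {i}) = κ (Q ⁻¹' ↑(Finset.univ : Finset ι)) :=
      sum_measure_preimage_singleton _ (fun i _ => hfib i)
    have h2 : (Q ⁻¹' ↑(Finset.univ : Finset ι)) = univ := by simp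
    have h3 : ∑ i : ι, κ (Q ⁻¹' {i}) = 1 := by rw [h1, h2, measure_univ]
    rw [← ENNReal.toReal_sum (fun i _ => measure_ne_top κ _), h3, ENNReal.toReal_one]
  have key : ∀ i : ι, Real.negMulLog (ν (Q ⁻¹' {i})).toReal ≤
      c * Real.negMulLog (μ (Q ⁻¹' {i})).toReal +
        ((μ (Q ⁻¹' {i})).toReal - (ν (Q ⁻¹' {i})).toReal) := by
    intro i
    refine negMulLog_le_aux hc ENNReal.toReal_nonneg ENNReal.toReal_nonneg ?_ (hle _ (hfib i))
    simpa using ENNReal.toReal_mono ENNReal.one_ne_top (prob_le_one (μ := μ) (s := Q ⁻¹' {i}))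
  calc partEntropy ν Q ≤ ∑ i : ι, (c * Real.negMulLog (μ (Q ⁻¹' {i})).toReal +
        ((μ (Q ⁻¹' {i})).toReal - (ν (Q ⁻¹' {i})).toReal)) :=
        Finset.sum_le_sum (fun i _ => key i)
    _ = c * partEntropy μ Q := by
        rw [Finset.sum_add_distrib, Finset.sum_sub_distrib, hsum μ inferInstance,
          hsum ν inferInstance, ← Finset.mul_sum]
        simp [partEntropy]

/-- Lemma 3a: if `f` is a T-invariant density with integral 1, then
`h_{μ_f}(T) ≤ ‖f‖_∞ · h_μ(T)`. -/
theorem entropy_withDensity_le {X : Type*} [MeasurableSpace X] (μ : Measure X)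
    [IsProbabilityMeasure μ] (T : X ≃ᵐ X) (hT : MeasurePreserving T μ μ)
    (f : X → ℝ) (hf : MemLp f ⊤ μ) (hf0 : ∀ x, 0 ≤ f x) (hfT : f ∘ T = f)
    (hint : ∫ x, f x ∂μ = 1) :
    ksEntropy (μ.withDensity (fun x => ENNReal.ofReal (f x))) (⇑T)
      ≤ eLpNorm f ⊤ μ * ksEntropy μ (⇑T) := by
  set ν := μ.withDensity (fun x => ENNReal.ofReal (f x)) with hνdef
  set C := eLpNorm f ⊤ μ with hCdef
  have hC : C ≠ ⊤ := hf.2.ne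
  set c := C.toReal with hcdef
  have hc : 0 ≤ c := ENNReal.toReal_nonneg
  have hνuniv : ν univ = 1 := by
    rw [hνdef, withDensity_apply _ MeasurableSet.univ, setLIntegral_univ,
      ← ofReal_integral_eq_lintegral_ofReal (hf.integrable le_top) (ae_of_all _ hf0), hint]
    simp
  have hνprob : IsProbabilityMeasure ν := ⟨hνuniv⟩
  -- the measure bound ν A ≤ C * μ A
  have hboundE : ∀ A : Set X, MeasurableSet A → ν A ≤ C * μ A := by
    intro A hA
    rw [hνdef, withDensity_apply _ hA]
    have hae : ∀ᵐ x ∂(μ.restrict A), ENNReal.ofReal (f x) ≤ C := by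
      refine ae_restrict_of_ae ?_
      filter_upwards [ae_le_eLpNormEssSup (f := f) (μ := μ)] with x hx
      calc ENNReal.ofReal (f x) ≤ (‖f x‖₊ : ℝ≥0∞) := Real.ofReal_le_enorm _
        _ ≤ C := by rw [hCdef, eLpNorm_exponent_top]; exact hx
    calc ∫⁻ x in A, ENNReal.ofReal (f x) ∂μ ≤ ∫⁻ _ in A, C ∂μ := lintegral_mono_ae hae
      _ = C * μ A := by rw [setLIntegral_const]
  have hbound : ∀ A : Set X, MeasurableSet A → (ν A).toReal ≤ c * (μ A).toReal := by
    intro A hA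
    have h1 : (ν A).toReal ≤ (C * μ A).toReal :=
      ENNReal.toReal_mono (ENNReal.mul_ne_top hC (measure_ne_top μ A)) (hboundE A hA)
    rwa [ENNReal.toReal_mul] at h1
  rw [ksEntropy]
  refine iSup_le fun k => iSup_le fun P => iSup_le fun hP => ?_
  have hQ : ∀ n : ℕ, Measurable (dynJoin (⇑T) P (n + 1)) := fun n =>
    measurable_pi_lambda _ fun i => hP.comp (T.measurable.iterate i)
  have hent : entropyRel ν (⇑T) P ≤ c * entropyRel μ (⇑T) P := by
    have hBdd : BddBelow (Set.range fun n : ℕ =>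
        partEntropy ν (dynJoin (⇑T) P (n + 1)) / (n + 1)) := by
      refine ⟨0, fun x hx => ?_⟩
      obtain ⟨n, rfl⟩ := hx
      have : 0 ≤ partEntropy ν (dynJoin (⇑T) P (n + 1)) := by
        refine Finset.sum_nonneg fun i _ => Real.negMulLog_nonneg ENNReal.toReal_nonneg ?_
        simpa using ENNReal.toReal_mono ENNReal.one_ne_top (prob_le_one (μ := ν))
      positivity
    rw [entropyRel, entropyRel, Real.mul_iInf_of_nonneg hc]
    refine ciInf_mono hBdd fun n => ?_
    rw [← mul_div_assoc]
    have := partEntropy_le_aux μ ν hc hbound (hQ n)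
    gcongr
  have hν0 : 0 ≤ entropyRel ν (⇑T) P := by
    refine Real.iInf_nonneg fun n => ?_
    have : 0 ≤ partEntropy ν (dynJoin (⇑T) P (n + 1)) := by
      refine Finset.sum_nonneg fun i _ => Real.negMulLog_nonneg ENNReal.toReal_nonneg ?_
      simpa using ENNReal.toReal_mono ENNReal.one_ne_top (prob_le_one (μ := ν))
    positivity
  calc ENNReal.ofReal (entropyRel ν (⇑T) P) ≤ ENNReal.ofReal (c * entropyRel μ (⇑T) P) :=
        ENNReal.ofReal_le_ofReal hent
    _ = ENNReal.ofReal c * ENNReal.ofReal (entropyRel μ (⇑T) P) := ENNReal.ofReal_mul hc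
    _ = C * ENNReal.ofReal (entropyRel μ (⇑T) P) := by rw [hcdef, ENNReal.ofReal_toReal hC]
    _ ≤ C * ksEntropy μ (⇑T) := by
        refine mul_le_mul_right ?_ C
        exact le_iSup_of_le k (le_iSup_of_le P (le_iSup_of_le hP le_rfl))
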